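/- Let $f_i: \mathbb{R}^d \to \mathbb{R}$ be differentiable, $L$-smooth, and $\lambda > L$. Let $\hat\theta_i(w)$ be the unique minimizer of $\theta \mapsto f_i(\theta) + \frac{\lambda}{2}\|\theta - w\|^2$. Then for all $w, v \in \mathbb{R}^d$: $\|\hat\theta_i(w) - \hat\theta_i(v)\| \leq \frac{\lambda}{\lambda - L}\|w - v\|$, i.e., the proximal map is Lipschitz with constant $\frac{\lambda}{\lambda - L}$. -/

import Mathlib

open InnerProductSpace in
theorem key (d : ℕ) (f : EuclideanSpace ℝ (Fin d) → ℝ) (lam : ℝ)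
    (hdiff : Differentiable ℝ f)
    (θhat : EuclideanSpace ℝ (Fin d) → EuclideanSpace ℝ (Fin d))
    (hθhat : ∀ w θ, f (θhat w) + lam / 2 * ‖θhat w - w‖ ^ 2
        ≤ f θ + lam / 2 * ‖θ - w‖ ^ 2)
    (w : EuclideanSpace ℝ (Fin d)) :
    lam • (θhat w - w) = - gradient f (θhat w) := by
  set a := θhat w with ha
  have hmin : IsLocalMin (fun θ => f θ + lam / 2 * ‖θ - w‖ ^ 2) a :=
    Filter.Eventually.of_forall (fun θ => hθhat w θ)
  have hn : HasFDerivAt (fun θ : EuclideanSpace ℝ (Fin d) => ‖θ - w‖ ^ 2)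
      (2 • (innerSL ℝ (a - w))) a := by
    have := ((hasFDerivAt_id a).sub_const w).norm_sq
    simpa using this
  have hg : HasFDerivAt (fun θ => f θ + lam / 2 * ‖θ - w‖ ^ 2)
      (fderiv ℝ f a + (lam / 2) • (2 • (innerSL ℝ (a - w)))) a :=
    (hdiff a).hasFDerivAt.add (hn.const_smul (lam / 2))
  have hzero := hmin.hasFDerivAt_eq_zero hg
  have hdual : (toDual ℝ (EuclideanSpace ℝ (Fin d))) (gradient f a) = fderiv ℝ f a := by
    rw [gradient]; exact (toDual ℝ _).apply_symm_apply _
  have happ : ∀ y, inner ℝ (gradient f a) y + lam * inner ℝ (a - w) y = (0:ℝ) := by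
    intro y
    have := congrFun (congrArg (fun (T : _ →L[ℝ] ℝ) => (T : _ → ℝ)) hzero) y
    simp only [ContinuousLinearMap.add_apply, ContinuousLinearMap.smul_apply,
      ContinuousLinearMap.zero_apply, ← hdual] at this
    simp only [toDual_apply_apply, innerSL_apply_apply, smul_eq_mul, nsmul_eq_mul] at this
    push_cast at this
    linarith
  have h3 : gradient f a + lam • (a - w) = 0 := by
    refine inner_self_eq_zero.mp (?_ : ⟪_, _⟫_ℝ = 0)
    rw [inner_add_left, real_inner_smul_left]
    exact happ _
  exact eq_neg_of_add_eq_zero_right h3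

theorem stmt_9 (d : ℕ) (f : EuclideanSpace ℝ (Fin d) → ℝ) (L lam : ℝ)
    (hdiff : Differentiable ℝ f)
    (hsmooth : ∀ w u, ‖gradient f w - gradient f u‖ ≤ L * ‖w - u‖)
    (hlam : L < lam)
    (θhat : EuclideanSpace ℝ (Fin d) → EuclideanSpace ℝ (Fin d))
    (hθhat : ∀ w θ, f (θhat w) + lam / 2 * ‖θhat w - w‖ ^ 2
        ≤ f θ + lam / 2 * ‖θ - w‖ ^ 2)
    (w v : EuclideanSpace ℝ (Fin d)) :
    ‖θhat w - θhat v‖ ≤ lam / (lam - L) * ‖w - v‖ := by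
  rcases Nat.eq_zero_or_pos d with hd | hd
  · subst hd
    haveI : Subsingleton (EuclideanSpace ℝ (Fin 0)) := by
      constructor; intro x y; ext i; exact absurd i.2 (Nat.not_lt_zero _)
    rw [Subsingleton.elim (θhat w) (θhat v), Subsingleton.elim w v]
    simp
  · have hL0 : 0 ≤ L := by
      set x : EuclideanSpace ℝ (Fin d) := EuclideanSpace.single ⟨0, hd⟩ 1 with hx
      have h1 := hsmooth x 0
      have h2 : ‖x - 0‖ = 1 := by
        rw [sub_zero, hx, EuclideanSpace.norm_single, norm_one]
      rw [h2, mul_one] at h1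
      exact le_trans (norm_nonneg _) h1
    have hlam0 : 0 < lam := lt_of_le_of_lt hL0 hlam
    have hw := key d f lam hdiff θhat hθhat w
    have hv := key d f lam hdiff θhat hθhat v
    have heq : lam • (θhat w - θhat v)
        = lam • (w - v) - (gradient f (θhat w) - gradient f (θhat v)) := by
      linear_combination (norm := module) hw - hv
    have hbound : lam * ‖θhat w - θhat v‖ ≤ lam * ‖w - v‖ + L * ‖θhat w - θhat v‖ := by
      calc lam * ‖θhat w - θhat v‖ = ‖lam • (θhat w - θhat v)‖ := by
            rw [norm_smul, Real.norm_eq_abs, abs_of_pos hlam0]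
        _ = ‖lam • (w - v) - (gradient f (θhat w) - gradient f (θhat v))‖ := by rw [heq]
        _ ≤ ‖lam • (w - v)‖ + ‖gradient f (θhat w) - gradient f (θhat v)‖ := norm_sub_le _ _
        _ ≤ lam * ‖w - v‖ + L * ‖θhat w - θhat v‖ := by
            rw [norm_smul, Real.norm_eq_abs, abs_of_pos hlam0]
            exact add_le_add le_rfl (hsmooth _ _)
    rw [div_mul_eq_mul_div, le_div_iff₀ (by linarith : (0:ℝ) < lam - L)]
    nlinarith [hbound]
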